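/- Let n ≥ 2, let p > 0 be real, and let k be a positive integer. The unique polynomial map P_k : ℂⁿ → ℂⁿ satisfying π_n(z₁^k,…,z_n^k) = P_k(π_n(z)) restricts to a proper holomorphic mapping from 𝔼_{p,n} onto 𝔼_{p/k,n}. -/

import Mathlib

open Finset

/-- The symmetrization map `π_n : ℂⁿ → ℂⁿ`, whose `k`-th component is the
`(k+1)`-st elementary symmetric polynomial of the coordinates. -/
noncomputable def piMap (n : ℕ) (z : Fin n → ℂ) : Fin n → ℂ :=
  fun k => ∑ s ∈ Finset.powersetCard (k.1 + 1) Finset.univ, ∏ j ∈ s, z j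

/-- The generalized complex ellipsoid `𝔹_{p,n} = {z : ∑ |z_j|^(2p) < 1}`. -/
noncomputable def ellipsoid (p : ℝ) (n : ℕ) : Set (Fin n → ℂ) :=
  {z | ∑ j, ‖z j‖ ^ (2 * p) < 1}

/-- The symmetrized `(p,n)`-ellipsoid `𝔼_{p,n} = π_n(𝔹_{p,n})`. -/
noncomputable def symEllipsoid (p : ℝ) (n : ℕ) : Set (Fin n → ℂ) :=
  piMap n '' ellipsoid p n

/-- The Euclidean unit ball in `ℂⁿ`. -/
def unitBall (n : ℕ) : Set (Fin n → ℂ) :=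
  {z | ∑ j, ‖z j‖ ^ 2 < 1}

/-- `f` is a proper holomorphic map from the domain `D` onto (into) the domain `G`:
it is holomorphic on `D`, maps `D` into `G`, and preimages of compact subsets of `G`
are compact. -/
def IsProperHolomorphic {n : ℕ} (f : (Fin n → ℂ) → (Fin n → ℂ))
    (D G : Set (Fin n → ℂ)) : Prop :=
  DifferentiableOn ℂ f D ∧ Set.MapsTo f D G ∧
    ∀ K : Set (Fin n → ℂ), K ⊆ G → IsCompact K → IsCompact (D ∩ f ⁻¹' K)

/-- `φ` is an automorphism of the domain `D`: a holomorphic bijection of `D` onto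
itself with holomorphic inverse. -/
def IsAutomorphismOf {n : ℕ} (φ : (Fin n → ℂ) → (Fin n → ℂ))
    (D : Set (Fin n → ℂ)) : Prop :=
  DifferentiableOn ℂ φ D ∧ Set.BijOn φ D D ∧
    ∃ ψ : (Fin n → ℂ) → (Fin n → ℂ), DifferentiableOn ℂ ψ D ∧ Set.InvOn ψ φ D D

/-- `f : ℂⁿ → ℂⁿ` is a polynomial mapping. -/
def IsPolynomialMap {n : ℕ} (f : (Fin n → ℂ) → (Fin n → ℂ)) : Prop :=
  ∃ P : Fin n → MvPolynomial (Fin n) ℂ, ∀ z k, f z k = MvPolynomial.eval z (P k)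

/- ## Auxiliary lemmas -/

lemma mvpoly_differentiable {n : ℕ} (q : MvPolynomial (Fin n) ℂ) :
    Differentiable ℂ (fun z : Fin n → ℂ => MvPolynomial.eval z q) := by
  induction q using MvPolynomial.induction_on with
  | C a => simp
  | add p q hp hq => simp only [map_add]; exact hp.add hq
  | mul_X p i hp => simp only [map_mul, MvPolynomial.eval_X]; exact hp.mul (differentiable_apply i)

lemma polyMap_differentiable {n : ℕ} {P : (Fin n → ℂ) → (Fin n → ℂ)}
    (hP : IsPolynomialMap P) : Differentiable ℂ P := by
  obtain ⟨Q, hQ⟩ := hP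
  rw [differentiable_pi]
  intro i
  have : (fun z => P z i) = fun z => MvPolynomial.eval z (Q i) := funext fun z => hQ z i
  rw [this]
  exact mvpoly_differentiable (Q i)

/-- If two tuples have the same elementary symmetric functions, they agree as multisets. -/
lemma multiset_eq_of_piMap_eq {n : ℕ} {a b : Fin n → ℂ} (h : piMap n a = piMap n b) :
    Multiset.map a Finset.univ.val = Multiset.map b Finset.univ.val := by
  set s := Multiset.map a Finset.univ.val with hs
  set t := Multiset.map b Finset.univ.val with ht
  have hcs : Multiset.card s = n := by simp [hs]
  have hct : Multiset.card t = n := by simp [ht]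
  have hesymm : ∀ i, s.esymm i = t.esymm i := by
    intro i
    rcases i with _ | j
    · simp [Multiset.esymm]
    · by_cases hj : j < n
      · have h2 := congrFun h ⟨j, hj⟩
        simp only [piMap] at h2
        rw [hs, ht, Finset.esymm_map_val, Finset.esymm_map_val]
        exact h2
      · have h1 : s.esymm (j+1) = 0 := by
          rw [Multiset.esymm, Multiset.powersetCard_eq_empty _ (by omega : Multiset.card s < j+1)]
          simp
        have h2 : t.esymm (j+1) = 0 := by
          rw [Multiset.esymm, Multiset.powersetCard_eq_empty _ (by omega : Multiset.card t < j+1)]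
          simp
        rw [h1, h2]
  have hprod : (s.map fun r => Polynomial.X + Polynomial.C r).prod
      = (t.map fun r => Polynomial.X + Polynomial.C r).prod := by
    rw [Multiset.prod_X_add_C_eq_sum_esymm, Multiset.prod_X_add_C_eq_sum_esymm, hcs, hct]
    exact Finset.sum_congr rfl fun j _ => by rw [hesymm j]
  have hneg : ∀ u : Multiset ℂ, (u.map fun r => Polynomial.X + Polynomial.C r)
      = ((u.map Neg.neg).map fun r => Polynomial.X - Polynomial.C r) := by
    intro u
    rw [Multiset.map_map]
    exact Multiset.map_congr rfl fun x _ => by simp [sub_neg_eq_add]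
  rw [hneg s, hneg t] at hprod
  have := congrArg Polynomial.roots hprod
  rw [Polynomial.roots_multiset_prod_X_sub_C, Polynomial.roots_multiset_prod_X_sub_C] at this
  exact Multiset.map_injective neg_injective this

lemma sum_comp_eq_of_multiset_eq {n : ℕ} {a b : Fin n → ℂ}
    (h : Multiset.map a Finset.univ.val = Multiset.map b Finset.univ.val)
    (g : ℂ → ℝ) : ∑ j, g (a j) = ∑ j, g (b j) := by
  have h1 : ∑ j, g (a j) = ((Multiset.map a Finset.univ.val).map g).sum := by
    rw [Multiset.map_map]; rfl
  have h2 : ∑ j, g (b j) = ((Multiset.map b Finset.univ.val).map g).sum := by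
    rw [Multiset.map_map]; rfl
  rw [h1, h2, h]

lemma norm_pow_rpow {p : ℝ} {k : ℕ} (hk : 0 < k) (c : ℂ) :
    ‖c ^ k‖ ^ (2 * (p / k)) = ‖c‖ ^ (2 * p) := by
  have hknz : (k : ℝ) ≠ 0 := Nat.cast_ne_zero.mpr hk.ne'
  rw [norm_pow, ← Real.rpow_natCast ‖c‖ k, ← Real.rpow_mul (norm_nonneg c)]
  congr 1
  field_simp

/-- Key lemma: if `π(z^k)` lies in the symmetrized `(p/k, n)`-ellipsoid then
`z` lies in the `(p,n)`-ellipsoid. -/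
lemma key_mem {n : ℕ} {p : ℝ} {k : ℕ} (hk : 0 < k) {z : Fin n → ℂ}
    (hmem : piMap n (fun j => z j ^ k) ∈ symEllipsoid (p / k) n) :
    ∑ j, ‖z j‖ ^ (2 * p) < 1 := by
  obtain ⟨u, hu, heq⟩ := hmem
  have hms := multiset_eq_of_piMap_eq heq
  have hsum := sum_comp_eq_of_multiset_eq hms (fun c => ‖c‖ ^ (2 * (p / k)))
  try simp only at hsum
  have : ∑ j, ‖z j‖ ^ (2 * p) = ∑ j, ‖u j‖ ^ (2 * (p / k)) := by
    rw [hsum]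
    exact Finset.sum_congr rfl fun j _ => (norm_pow_rpow hk (z j)).symm
  rw [this]
  exact hu

lemma ellipsoid_pow_mem {n : ℕ} {p : ℝ} {k : ℕ} (hk : 0 < k) {z : Fin n → ℂ}
    (hz : ∑ j, ‖z j‖ ^ (2 * p) < 1) :
    (fun j => z j ^ k) ∈ ellipsoid (p / k) n := by
  show ∑ j, ‖z j ^ k‖ ^ (2 * (p / k)) < 1
  calc ∑ j, ‖z j ^ k‖ ^ (2 * (p / k)) = ∑ j, ‖z j‖ ^ (2 * p) :=
        Finset.sum_congr rfl fun j _ => norm_pow_rpow hk (z j)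
    _ < 1 := hz

/-- The polynomial map `P_k` satisfying `π_n(z^k) = P_k(π_n(z))` restricts to a
proper holomorphic mapping from `𝔼_{p,n}` onto `𝔼_{p/k,n}`. -/
theorem P_is_proper (n : ℕ) (hn : 2 ≤ n) (p : ℝ) (hp : 0 < p) (k : ℕ) (hk : 0 < k)
    (P : (Fin n → ℂ) → (Fin n → ℂ)) (hP : IsPolynomialMap P)
    (hPk : ∀ z : Fin n → ℂ, piMap n (fun j => z j ^ k) = P (piMap n z)) :
    IsProperHolomorphic P (symEllipsoid p n) (symEllipsoid (p / k) n) ∧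
      P '' symEllipsoid p n = symEllipsoid (p / k) n := by
  have hPdiff : Differentiable ℂ P := polyMap_differentiable hP
  have hPcont : Continuous P := hPdiff.continuous
  -- MapsTo
  have hmaps : Set.MapsTo P (symEllipsoid p n) (symEllipsoid (p / k) n) := by
    rintro w ⟨z, hz, rfl⟩
    rw [← hPk z]
    exact ⟨fun j => z j ^ k, ellipsoid_pow_mem hk hz, rfl⟩
  -- surjectivity
  have hsurj : symEllipsoid (p / k) n ⊆ P '' symEllipsoid p n := by
    rintro w ⟨u, hu, rfl⟩
    choose z hzk using fun j => IsAlgClosed.exists_pow_nat_eq (u j) hk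
    have hzu : (fun j => z j ^ k) = u := funext hzk
    have hzmem : z ∈ ellipsoid p n := by
      show ∑ j, ‖z j‖ ^ (2 * p) < 1
      have : ∑ j, ‖z j‖ ^ (2 * p) = ∑ j, ‖u j‖ ^ (2 * (p / k)) := by
        refine Finset.sum_congr rfl fun j _ => ?_
        rw [← hzk j]
        exact (norm_pow_rpow hk (z j)).symm
      rw [this]; exact hu
    refine ⟨piMap n z, ⟨z, hzmem, rfl⟩, ?_⟩
    rw [← hPk z, hzu]
  -- continuity of the gauge function
  have hFcont : Continuous (fun z : Fin n → ℂ => ∑ j, ‖z j‖ ^ (2 * p)) := by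
    refine continuous_finset_sum _ fun j _ => ?_
    rw [continuous_iff_continuousAt]
    intro z
    exact (Real.continuousAt_rpow_const _ _ (Or.inr (by positivity))).comp
      ((continuous_apply j).norm.continuousAt)
  -- the compact "closed ellipsoid"
  set C : Set (Fin n → ℂ) := {z | ∑ j, ‖z j‖ ^ (2 * p) ≤ 1} with hC
  have hCclosed : IsClosed C := isClosed_le hFcont continuous_const
  have hCbdd : C ⊆ Metric.closedBall 0 1 := by
    intro z hz
    rw [mem_closedBall_zero_iff]
    rw [pi_norm_le_iff_of_nonneg zero_le_one]
    intro j
    rw [Set.mem_setOf_eq] at hz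
    by_contra hlt
    push_neg at hlt
    have h1 : (1 : ℝ) < ‖z j‖ ^ (2 * p) :=
      Real.one_lt_rpow_iff_of_pos (lt_trans zero_lt_one hlt) |>.mpr (Or.inl ⟨hlt, by positivity⟩)
    have h2 : ‖z j‖ ^ (2 * p) ≤ ∑ i, ‖z i‖ ^ (2 * p) :=
      Finset.single_le_sum (f := fun i => ‖z i‖ ^ (2 * p)) (fun i _ => by positivity) (Finset.mem_univ j)
    linarith
  have hCcompact : IsCompact C :=
    (isCompact_closedBall 0 1).of_isClosed_subset hCclosed hCbdd
  -- the piMap is continuous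
  have hpiCont : Continuous (piMap n) := by
    rw [continuous_pi_iff]
    intro i
    exact continuous_finset_sum _ fun s _ => continuous_finset_prod _ fun j _ =>
      continuous_apply j
  have hproper : ∀ K : Set (Fin n → ℂ), K ⊆ symEllipsoid (p / k) n → IsCompact K →
      IsCompact (symEllipsoid p n ∩ P ⁻¹' K) := by
    intro K hKG hKc
    have heq : symEllipsoid p n ∩ P ⁻¹' K = (piMap n '' C) ∩ P ⁻¹' K := by
      ext w
      constructor
      · rintro ⟨⟨z, hz, rfl⟩, hw2⟩
        refine ⟨⟨z, ?_, rfl⟩, hw2⟩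
        simp only [hC, Set.mem_setOf_eq]
        exact le_of_lt hz
      · rintro ⟨⟨z, _, rfl⟩, hw2⟩
        refine ⟨⟨z, ?_, rfl⟩, hw2⟩
        have hPin : P (piMap n z) ∈ symEllipsoid (p / k) n := hKG hw2
        rw [← hPk z] at hPin
        exact key_mem hk hPin
    rw [heq]
    exact (hCcompact.image hpiCont).inter_right (hKc.isClosed.preimage hPcont)
  refine ⟨⟨hPdiff.differentiableOn, hmaps, hproper⟩, ?_⟩
  exact Set.Subset.antisymm (Set.image_subset_iff.mpr hmaps) hsurj
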